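/- Let a, b ∈ ℝ^d, let x be a point on the closed segment [a, b], and let ε and α be real numbers with 0 ≤ ε ≤ min(‖a − x‖, ‖b − x‖) and ε ≤ α. Then closedBall(a, α) ∩ closedBall(b, α) ⊆ closedBall(x, √(α² − ε²)). -/

import Mathlib

open Metric Set

theorem stmt_16 {d : ℕ} (a b x : EuclideanSpace ℝ (Fin d))
    (hx : x ∈ segment ℝ a b) (ε α : ℝ)
    (hε0 : 0 ≤ ε) (hεa : ε ≤ ‖a - x‖) (hεb : ε ≤ ‖b - x‖) (hεα : ε ≤ α) :
    Metric.closedBall a α ∩ Metric.closedBall b α ⊆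
      Metric.closedBall x (Real.sqrt (α ^ 2 - ε ^ 2)) := by
  rintro y ⟨hya, hyb⟩
  rw [mem_closedBall, dist_eq_norm] at hya hyb ⊢
  rw [Real.le_sqrt (norm_nonneg _)]
  obtain ⟨u, v, hu, hv, huv, hxv⟩ := hx
  set c : ℝ := inner ℝ (y - x) (b - a) with hc
  have hxa : x - a = v • (b - a) := by
    rw [← hxv]
    have : u = 1 - v := by linarith
    rw [this]
    module
  have hxb : x - b = -(u • (b - a)) := by
    rw [← hxv]
    have : v = 1 - u := by linarith
    rw [this]
    module
  have expand : ∀ z : EuclideanSpace ℝ (Fin d),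
      ‖y - z‖ ^ 2 = ‖y - x‖ ^ 2 + 2 * inner ℝ (y - x) (x - z) + ‖x - z‖ ^ 2 := by
    intro z
    have h := norm_add_sq_real (y - x) (x - z)
    rw [sub_add_sub_cancel] at h
    exact h
  have hya2 : ‖y - a‖ ^ 2 ≤ α ^ 2 := by
    have := pow_le_pow_left₀ (norm_nonneg _) hya 2
    simpa using this
  have hyb2 : ‖y - b‖ ^ 2 ≤ α ^ 2 := by
    have := pow_le_pow_left₀ (norm_nonneg _) hyb 2
    simpa using this
  have hεa2 : ε ^ 2 ≤ ‖x - a‖ ^ 2 := by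
    rw [norm_sub_rev]
    exact pow_le_pow_left₀ hε0 hεa 2
  have hεb2 : ε ^ 2 ≤ ‖x - b‖ ^ 2 := by
    rw [norm_sub_rev]
    exact pow_le_pow_left₀ hε0 hεb 2
  rcases le_or_gt 0 c with h | h
  · have hin : (inner ℝ (y - x) (x - a) : ℝ) = v * c := by
      rw [hxa, real_inner_smul_right]
    have := expand a
    rw [hin] at this
    nlinarith [mul_nonneg hv h]
  · have hin : (inner ℝ (y - x) (x - b) : ℝ) = -(u * c) := by
      rw [hxb, inner_neg_right, real_inner_smul_right]
    have := expand b
    rw [hin] at this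
    nlinarith [mul_nonpos_of_nonneg_of_nonpos hu h.le]
  nlinarith
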